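/- arXiv:1407.1674 — 2 statements merged into one kernel-verified Lean document; each statement's English description precedes it below -/
import Mathlib

section
/- Let f : Ω → ℝ̄ be measurable, P a probability on Ω = D_0(ℝ_+,ℝ^d), t ≥ 0, and {P^ω_t} a regular conditional probability distribution of P given ℱ_t with P^ω_t{ω' : ω' = ω on [0,t]} = 1. Define P^{t,ω}(F) = P^ω_t(ω ⊗_t F) and f^{t,ω}(ω̃) = f(ω ⊗_t ω̃). Then E^{P^{t,ω}}[f^{t,ω}] = E^P[f | ℱ_t](ω) for P-a.e. ω (with the convention ∞ − ∞ = −∞ in defining conditional expectations). -/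
open MeasureTheory Filter Set
open scoped NNReal
open scoped ENNReal

/-- Path space `Ω = (ℝ_+ → ℝ^d)` carrying the product σ-field (on
`D_0(ℝ_+,ℝ^d)` this is the Borel σ-field of the Skorohod topology). -/
abbrev PathSpace (d : ℕ) := ℝ≥0 → EuclideanSpace ℝ (Fin d)

/-- The canonical filtration: `ℱ_t` is generated by the coordinates up to `t`. -/
noncomputable def canonicalFiltration (d : ℕ) (t : ℝ≥0) :
    MeasurableSpace (PathSpace d) :=
  ⨆ (s : ℝ≥0) (_ : s ≤ t), MeasurableSpace.comap (fun ω => ω s) inferInstance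

/-- The concatenation `ω ⊗_t ω̃` of two paths at time `t`. -/
noncomputable def concat {d : ℕ} (t : ℝ≥0) (ω ωt : PathSpace d) : PathSpace d :=
  fun u => if u < t then ω u else ω t + ωt (u - t)

/-- Let `f` be measurable, `P` a probability on path space,
`t ≥ 0`, and `{P^ω_t} = K` a regular conditional probability distribution of
`P` given `ℱ_t` concentrated on `{ω' : ω' = ω on [0,t]}`. Define
`P^{t,ω}(F) = P^ω_t(ω ⊗_t F)` and `f^{t,ω}(ω̃) = f(ω ⊗_t ω̃)`. Then
`E^{P^{t,ω}}[f^{t,ω}] = E^P[f | ℱ_t](ω)` for `P`-a.e. `ω`. -/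
theorem stmt15 {d : ℕ} (t : ℝ≥0)
    (P : Measure (PathSpace d)) [IsProbabilityMeasure P]
    (f : PathSpace d → ℝ) (hfmeas : Measurable f) (hfint : Integrable f P)
    (K : PathSpace d → Measure (PathSpace d))
    (hKprob : ∀ ω, IsProbabilityMeasure (K ω))
    (hKmeas : ∀ A : Set (PathSpace d), MeasurableSet A →
      Measurable[canonicalFiltration d t] fun ω => K ω A)
    (hKdisint : ∀ A B : Set (PathSpace d), MeasurableSet A →
      MeasurableSet[canonicalFiltration d t] B →
      ∫⁻ ω in B, K ω A ∂P = P (A ∩ B))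
    (hKconc : ∀ ω, K ω {ω' | ∀ s ≤ t, ω' s = ω s} = 1)
    (Pt : PathSpace d → Measure (PathSpace d))
    (hPt : ∀ ω, ∀ F : Set (PathSpace d), MeasurableSet F →
      Pt ω F = K ω ((fun ωt => concat t ω ωt) '' F)) :
    ∀ᵐ ω ∂P,
      ∫ ωt, f (concat t ω ωt) ∂(Pt ω) = (P[f | canonicalFiltration d t]) ω := by
  classical
  have hm : canonicalFiltration d t ≤ (inferInstance : MeasurableSpace (PathSpace d)) := by
    refine iSup₂_le fun s _ => ?_
    exact (measurable_pi_apply (X := fun _ : ℝ≥0 => EuclideanSpace ℝ (Fin d)) s).comap_le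
  -- measurability of `K` as a map into measures
  have hKm0 : Measurable K := by
    rw [Measure.measurable_measure]
    exact fun s hs => (hKmeas s hs).mono hm le_rfl
  have hKmF : Measurable[canonicalFiltration d t] K :=
    (@Measure.measurable_measure (PathSpace d) (PathSpace d) (canonicalFiltration d t) _ K).mpr
      (fun s hs => hKmeas s hs)
  -- kernels packaging K, for the ambient σ-algebra and for `canonicalFiltration d t`
  let κ : ProbabilityTheory.Kernel (PathSpace d) (PathSpace d) := ⟨K, hKm0⟩
  haveI : ProbabilityTheory.IsMarkovKernel κ := ⟨fun a => hKprob a⟩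
  -- (coe lemma added below)
  let κm : @ProbabilityTheory.Kernel (PathSpace d) (PathSpace d)
      (canonicalFiltration d t) MeasurableSpace.pi :=
    @ProbabilityTheory.Kernel.mk (PathSpace d) (PathSpace d)
      (canonicalFiltration d t) MeasurableSpace.pi K hKmF
  have hκm : ∀ a, κm a = K a := fun _ => rfl
  have hκ : ∀ a, κ a = K a := fun _ => rfl
  haveI : @ProbabilityTheory.IsMarkovKernel _ _ (canonicalFiltration d t) _ κm :=
    ⟨fun a => by rw [hκm a]; exact hKprob a⟩
  set g : PathSpace d → ℝ := fun ω => ∫ x, f x ∂(K ω) with hgdef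
  -- strong measurability of g w.r.t. the filtration
  have hgsm : StronglyMeasurable[canonicalFiltration d t] g := by
    have := MeasureTheory.StronglyMeasurable.integral_kernel_prod_right
      (κ := κm) (f := fun _ y => f y)
      (hfmeas.stronglyMeasurable.comp_measurable
        (@measurable_snd (PathSpace d) (PathSpace d) (canonicalFiltration d t) _))
    simpa only [hκm, hgdef] using this
  -- bind identities
  have hbind : ∀ B : Set (PathSpace d), MeasurableSet[canonicalFiltration d t] B →
      (P.restrict B).bind K = P.restrict B := by
    intro B hB
    ext A hA
    rw [Measure.bind_apply hA hKm0.aemeasurable, hKdisint A B hA hB, Measure.restrict_apply hA]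
  have hlint : ∀ (h : PathSpace d → ℝ≥0∞), Measurable h →
      ∀ B : Set (PathSpace d), MeasurableSet[canonicalFiltration d t] B →
      ∫⁻ ω in B, ∫⁻ x, h x ∂(K ω) ∂P = ∫⁻ x in B, h x ∂P := by
    intro h hh B hB
    rw [← Measure.lintegral_bind hKm0.aemeasurable hh.aemeasurable, hbind B hB]
  -- measurable auxiliary lintegral maps
  have hnm : Measurable fun ω => ∫⁻ x, (‖f x‖₊ : ℝ≥0∞) ∂(K ω) :=
    Measurable.lintegral_kernel (κ := κ) hfmeas.nnnorm.coe_nnreal_ennreal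
  have hφm : Measurable fun ω => ∫⁻ x, ENNReal.ofReal (f x) ∂(K ω) :=
    Measurable.lintegral_kernel (κ := κ) hfmeas.ennreal_ofReal
  have hψm : Measurable fun ω => ∫⁻ x, ENNReal.ofReal (-f x) ∂(K ω) :=
    Measurable.lintegral_kernel (κ := κ) hfmeas.neg.ennreal_ofReal
  have hnorm_univ : ∫⁻ ω, ∫⁻ x, (‖f x‖₊ : ℝ≥0∞) ∂(K ω) ∂P = ∫⁻ x, (‖f x‖₊ : ℝ≥0∞) ∂P := by
    simpa using hlint _ hfmeas.nnnorm.coe_nnreal_ennreal univ MeasurableSet.univ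
  -- integrability of g
  have hgint : Integrable g P := by
    refine ⟨(hgsm.mono hm).aestronglyMeasurable, ?_⟩
    show ∫⁻ ω, (‖g ω‖₊ : ℝ≥0∞) ∂P < ∞
    calc ∫⁻ ω, (‖g ω‖₊ : ℝ≥0∞) ∂P
        ≤ ∫⁻ ω, ∫⁻ x, (‖f x‖₊ : ℝ≥0∞) ∂(K ω) ∂P :=
          lintegral_mono fun ω => enorm_integral_le_lintegral_enorm _
      _ = ∫⁻ x, (‖f x‖₊ : ℝ≥0∞) ∂P := hnorm_univ
      _ < ∞ := hfint.2
  -- the set-integral identity for g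
  have hg_eq : ∀ B : Set (PathSpace d), MeasurableSet[canonicalFiltration d t] B →
      ∫ ω in B, g ω ∂P = ∫ ω in B, f ω ∂P := by
    intro B hB
    have hfB : Integrable f (P.restrict B) := hfint.restrict
    have hnfin : ∫⁻ ω in B, ∫⁻ x, (‖f x‖₊ : ℝ≥0∞) ∂(K ω) ∂P ≠ ∞ := by
      rw [hlint _ hfmeas.nnnorm.coe_nnreal_ennreal B hB]
      have hf2 : ∫⁻ x, (‖f x‖₊ : ℝ≥0∞) ∂P < ∞ := hfint.2
      exact ne_top_of_le_ne_top hf2.ne (lintegral_mono' Measure.restrict_le_self le_rfl)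
    have hfin : ∀ᵐ ω ∂(P.restrict B), ∫⁻ x, (‖f x‖₊ : ℝ≥0∞) ∂(K ω) ≠ ∞ := by
      filter_upwards [ae_lt_top hnm hnfin] with ω hω using hω.ne
    have hφle : ∀ ω, ∫⁻ x, ENNReal.ofReal (f x) ∂(K ω)
        ≤ ∫⁻ x, (‖f x‖₊ : ℝ≥0∞) ∂(K ω) :=
      fun ω => lintegral_mono fun x => Real.ofReal_le_enorm _
    have hψle : ∀ ω, ∫⁻ x, ENNReal.ofReal (-f x) ∂(K ω)
        ≤ ∫⁻ x, (‖f x‖₊ : ℝ≥0∞) ∂(K ω) := by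
      intro ω
      refine lintegral_mono fun x => ?_
      rw [← nnnorm_neg]; exact Real.ofReal_le_enorm (-f x)
    have hφfin : ∀ᵐ ω ∂(P.restrict B), ∫⁻ x, ENNReal.ofReal (f x) ∂(K ω) ≠ ∞ := by
      filter_upwards [hfin] with ω hω using ((hφle ω).trans_lt (lt_top_iff_ne_top.2 hω)).ne
    have hψfin : ∀ᵐ ω ∂(P.restrict B), ∫⁻ x, ENNReal.ofReal (-f x) ∂(K ω) ≠ ∞ := by
      filter_upwards [hfin] with ω hω using ((hψle ω).trans_lt (lt_top_iff_ne_top.2 hω)).ne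
    have key : ∀ᵐ ω ∂(P.restrict B), g ω =
        (∫⁻ x, ENNReal.ofReal (f x) ∂(K ω)).toReal
          - (∫⁻ x, ENNReal.ofReal (-f x) ∂(K ω)).toReal := by
      filter_upwards [hfin] with ω hω
      have hintK : Integrable f (K ω) :=
        ⟨hfmeas.aestronglyMeasurable, show ∫⁻ x, (‖f x‖₊ : ℝ≥0∞) ∂(K ω) < ∞ from
          lt_top_iff_ne_top.2 hω⟩
      exact integral_eq_lintegral_pos_part_sub_lintegral_neg_part hintK
    have hφlint : ∫⁻ ω in B, ∫⁻ x, ENNReal.ofReal (f x) ∂(K ω) ∂P ≠ ∞ :=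
      ne_top_of_le_ne_top hnfin (lintegral_mono fun ω => hφle ω)
    have hψlint : ∫⁻ ω in B, ∫⁻ x, ENNReal.ofReal (-f x) ∂(K ω) ∂P ≠ ∞ :=
      ne_top_of_le_ne_top hnfin (lintegral_mono fun ω => hψle ω)
    have hφint : Integrable (fun ω => (∫⁻ x, ENNReal.ofReal (f x) ∂(K ω)).toReal)
        (P.restrict B) :=
      integrable_toReal_of_lintegral_ne_top hφm.aemeasurable hφlint
    have hψint : Integrable (fun ω => (∫⁻ x, ENNReal.ofReal (-f x) ∂(K ω)).toReal)
        (P.restrict B) :=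
      integrable_toReal_of_lintegral_ne_top hψm.aemeasurable hψlint
    calc ∫ ω in B, g ω ∂P
        = ∫ ω in B, ((∫⁻ x, ENNReal.ofReal (f x) ∂(K ω)).toReal
            - (∫⁻ x, ENNReal.ofReal (-f x) ∂(K ω)).toReal) ∂P := integral_congr_ae key
      _ = (∫ ω in B, (∫⁻ x, ENNReal.ofReal (f x) ∂(K ω)).toReal ∂P)
            - ∫ ω in B, (∫⁻ x, ENNReal.ofReal (-f x) ∂(K ω)).toReal ∂P :=
          integral_sub hφint hψint
      _ = (∫⁻ ω in B, ∫⁻ x, ENNReal.ofReal (f x) ∂(K ω) ∂P).toReal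
            - (∫⁻ ω in B, ∫⁻ x, ENNReal.ofReal (-f x) ∂(K ω) ∂P).toReal := by
          rw [integral_toReal hφm.aemeasurable.restrict
              (hφfin.mono fun ω h => lt_top_iff_ne_top.2 h),
            integral_toReal hψm.aemeasurable.restrict
              (hψfin.mono fun ω h => lt_top_iff_ne_top.2 h)]
      _ = (∫⁻ x in B, ENNReal.ofReal (f x) ∂P).toReal
            - (∫⁻ x in B, ENNReal.ofReal (-f x) ∂P).toReal := by
          rw [hlint _ hfmeas.ennreal_ofReal B hB, hlint (fun x => ENNReal.ofReal (-f x)) hfmeas.neg.ennreal_ofReal B hB]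
      _ = ∫ ω in B, f ω ∂P :=
          (integral_eq_lintegral_pos_part_sub_lintegral_neg_part hfB).symm
  -- conclude via uniqueness of conditional expectation
  haveI : SigmaFinite (P.trim hm) := inferInstance
  have hcond : g =ᵐ[P] P[f | canonicalFiltration d t] :=
    ae_eq_condExp_of_forall_setIntegral_eq hm hfint
      (fun s _ _ => hgint.integrableOn)
      (fun s hs _ => hg_eq s hs)
      hgsm.aestronglyMeasurable
  -- the pushforward identity, valid for every ω
  have hmap : ∀ ω, ∫ ωt, f (concat t ω ωt) ∂(Pt ω) = g ω := by
    intro ω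
    haveI := hKprob ω
    have hc : Measurable (fun ωt : PathSpace d => concat t ω ωt) := by
      refine measurable_pi_lambda _ fun u => ?_
      simp only [concat]
      by_cases h : u < t
      · simpa [h] using measurable_const
      · simpa [h] using (measurable_pi_apply (X := fun _ : ℝ≥0 => EuclideanSpace ℝ (Fin d)) (u - t)).const_add (ω t)
    have hinj : Function.Injective (fun ωt : PathSpace d => concat t ω ωt) := by
      intro a b hab
      funext v
      have h1 := congrFun hab (t + v)
      have h2 : ¬ t + v < t := not_lt.2 le_self_add
      simp only [concat, h2, if_false, add_tsub_cancel_left] at h1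
      exact add_left_cancel h1
    have hSsub : {ω' : PathSpace d | ∀ s ≤ t, ω' s = ω s}
        ⊆ Set.range (fun ωt : PathSpace d => concat t ω ωt) := by
      intro ω' hω'
      refine ⟨fun v => ω' (t + v) - ω t, ?_⟩
      funext u
      simp only [concat]
      by_cases h : u < t
      · simp [h, hω' u h.le]
      · have ht : t + (u - t) = u := add_tsub_cancel_of_le (not_lt.1 h)
        simp only [h, if_false, ht]
        abel
    have hKrange : ∀ A : Set (PathSpace d), MeasurableSet A →
        K ω (A ∩ Set.range (fun ωt : PathSpace d => concat t ω ωt)) = K ω A := by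
      intro A hA
      refine le_antisymm (measure_mono inter_subset_left) ?_
      set B := toMeasurable (K ω) (A ∩ Set.range (fun ωt : PathSpace d => concat t ω ωt))
        with hBdef
      have hsub : {ω' : PathSpace d | ∀ s ≤ t, ω' s = ω s} ⊆ B ∪ Aᶜ := by
        intro x hx
        by_cases hxA : x ∈ A
        · exact Or.inl (subset_toMeasurable _ _ ⟨hxA, hSsub hx⟩)
        · exact Or.inr hxA
      have h1 : (1 : ℝ≥0∞) ≤ K ω B + K ω Aᶜ := by
        calc (1 : ℝ≥0∞) = K ω {ω' | ∀ s ≤ t, ω' s = ω s} := (hKconc ω).symm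
          _ ≤ K ω (B ∪ Aᶜ) := measure_mono hsub
          _ ≤ K ω B + K ω Aᶜ := measure_union_le _ _
      have hAc : K ω A = 1 - K ω Aᶜ := by
        have := prob_compl_eq_one_sub (μ := K ω) hA.compl
        rwa [compl_compl] at this
      have : K ω A ≤ K ω B := by
        rw [hAc]
        exact tsub_le_iff_right.2 h1
      rwa [hBdef, measure_toMeasurable] at this
    have hmapK : (Pt ω).map (fun ωt : PathSpace d => concat t ω ωt) = K ω := by
      ext A hA
      rw [Measure.map_apply hc hA, hPt ω _ (hc hA), Set.image_preimage_eq_inter_range,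
        hKrange A hA]
    calc ∫ ωt, f (concat t ω ωt) ∂(Pt ω)
        = ∫ x, f x ∂((Pt ω).map (fun ωt : PathSpace d => concat t ω ωt)) :=
          (integral_map hc.aemeasurable hfmeas.aestronglyMeasurable).symm
      _ = g ω := by rw [hmapK]
  filter_upwards [hcond] with ω hω
  rw [hmap ω, hω]
end

section
/- Let A : [0,T] → ℝ be continuous and nondecreasing with A_0 = 0, and let C : [0,T] → ℝ be nondecreasing with dC ≪ dA. Define c_t = limsup_{n→∞} (C_t − C_{(t−1/n)∨0})/(A_t − A_{(t−1/n)∨0}) (with 0/0 := 0) when this limsup is finite and c_t = 0 otherwise. Then c is Borel measurable and C_t = C_0 + ∫_0^t c_s dA_s for all t ∈ [0,T]. -/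
open MeasureTheory Filter Set
open scoped ENNReal Topology

/-- The difference-quotient approximations
`(C_t − C_{(t−1/n)∨0}) / (A_t − A_{(t−1/n)∨0})`, computed in `ℝ≥0∞`
(so that `0/0 = 0`). -/
noncomputable def diffQuot (A C : StieltjesFunction ℝ) (n : ℕ) (t : ℝ) : ℝ≥0∞ :=
  ENNReal.ofReal (C t - C (max (t - 1 / (n + 1)) 0)) /
    ENNReal.ofReal (A t - A (max (t - 1 / (n + 1)) 0))

/-- The pathwise density `c = dC/dA`: the limit superior of the difference
quotients when it is finite, and `0` otherwise. -/
noncomputable def stieltjesDeriv (A C : StieltjesFunction ℝ) (t : ℝ) : ℝ :=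
  if Filter.limsup (fun n => diffQuot A C n t) atTop ≠ ⊤ then
    (Filter.limsup (fun n => diffQuot A C n t) atTop).toReal
  else 0

/-- Pushforward of (a restriction of) the Stieltjes measure of a continuous
nondecreasing function under the function itself is Lebesgue measure on the
image interval. -/
lemma map_stieltjes_restrict (A : StieltjesFunction ℝ) (hAcont : Continuous A)
    {a b : ℝ} (hab : a ≤ b) :
    Measure.map A (A.measure.restrict (Set.Ioc a b))
      = volume.restrict (Set.Ioc (A a) (A b)) := by
  haveI : IsFiniteMeasure (A.measure.restrict (Set.Ioc a b)) :=
    ⟨by rw [Measure.restrict_apply_univ, A.measure_Ioc]; exact ENNReal.ofReal_lt_top⟩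
  haveI : IsFiniteMeasure (Measure.map A (A.measure.restrict (Set.Ioc a b))) :=
    Measure.isFiniteMeasure_map _ _
  refine MeasureTheory.Measure.ext_of_Iic _ _ (fun c => ?_)
  rw [Measure.map_apply A.mono.measurable measurableSet_Iic,
    Measure.restrict_apply (A.mono.measurable measurableSet_Iic),
    Measure.restrict_apply measurableSet_Iic]
  rcases lt_or_ge c (A a) with hc | hc
  · have h1 : (A : ℝ → ℝ) ⁻¹' Iic c ∩ Ioc a b = ∅ := by
      refine eq_empty_of_forall_notMem fun x hx => ?_
      exact absurd (le_trans (A.mono hx.2.1.le) hx.1) (not_le.2 hc)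
    have h2 : Iic c ∩ Ioc (A a) (A b) = ∅ := by
      refine eq_empty_of_forall_notMem fun x hx => ?_
      exact absurd (lt_of_lt_of_le hx.2.1 hx.1) (not_lt.2 hc.le)
    rw [h1, h2]; simp
  · set S : Set ℝ := Icc a b ∩ (A : ℝ → ℝ) ⁻¹' Iic c with hS
    have hSne : a ∈ S := ⟨⟨le_rfl, hab⟩, hc⟩
    have hSbdd : BddAbove S := (bddAbove_Icc).mono inter_subset_left
    have hSclosed : IsClosed S := isClosed_Icc.inter (isClosed_Iic.preimage hAcont)
    set τ := sSup S with hτ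
    have hτS : τ ∈ S := hSclosed.csSup_mem ⟨a, hSne⟩ hSbdd
    have hpre : (A : ℝ → ℝ) ⁻¹' Iic c ∩ Ioc a b = Ioc a τ := by
      apply Set.Subset.antisymm
      · rintro x ⟨hx1, hx2⟩
        exact ⟨hx2.1, le_csSup hSbdd ⟨⟨hx2.1.le, hx2.2⟩, hx1⟩⟩
      · rintro x ⟨hx1, hx2⟩
        exact ⟨le_trans (A.mono hx2) hτS.2, hx1, hx2.trans hτS.1.2⟩
    have hAτ : A τ = min c (A b) := by
      rcases le_or_gt (A b) c with hbc | hbc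
      · have hbS : b ∈ S := ⟨⟨hab, le_rfl⟩, hbc⟩
        have : τ = b := le_antisymm hτS.1.2 (le_csSup hSbdd hbS)
        rw [this, min_eq_right hbc]
      · have : c ∈ (A : ℝ → ℝ) '' Icc a b :=
          intermediate_value_Icc hab hAcont.continuousOn ⟨hc, hbc.le⟩
        obtain ⟨u, huI, huA⟩ := this
        have huS : u ∈ S := ⟨huI, huA.le⟩
        have h1 : c ≤ A τ := huA ▸ A.mono (le_csSup hSbdd huS)
        have h2 : A τ ≤ c := hτS.2
        rw [le_antisymm h2 h1, min_eq_left hbc.le]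
    rw [hpre, A.measure_Ioc, Set.inter_comm, Set.Ioc_inter_Iic, Real.volume_Ioc, hAτ,
      min_comm]

/-- The set of points `t` such that `A` is constant on some interval `[s, t]`,
`s < t`, is null for the Stieltjes measure of `A`, provided `A` is continuous. -/
lemma plateau_null (A : StieltjesFunction ℝ) (hAcont : Continuous A) :
    A.measure {t : ℝ | ∃ s, s < t ∧ A s = A t} = 0 := by
  have hcov : {t : ℝ | ∃ s, s < t ∧ A s = A t}
      ⊆ ⋃ q : ℚ, {t : ℝ | (q : ℝ) < t ∧ A q = A t} := by
    rintro t ⟨s, hst, hA⟩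
    obtain ⟨q, hq1, hq2⟩ := exists_rat_btwn hst
    refine Set.mem_iUnion.2 ⟨q, hq2, le_antisymm (A.mono hq2.le) ?_⟩
    calc A t = A s := hA.symm
    _ ≤ A q := A.mono hq1.le
  refine measure_mono_null hcov (measure_iUnion_null fun q => ?_)
  have hcov2 : {t : ℝ | (q : ℝ) < t ∧ A q = A t}
      ⊆ ⋃ m : ℕ, ({t : ℝ | (q : ℝ) < t ∧ A q = A t} ∩ Iic ((q : ℝ) + m + 1)) := by
    intro t ht
    obtain ⟨m, hm⟩ := exists_nat_ge (t - q)
    exact Set.mem_iUnion.2 ⟨m, ht, by simp only [mem_Iic]; linarith⟩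
  refine measure_mono_null hcov2 (measure_iUnion_null fun m => ?_)
  set u : ℝ := (q : ℝ) + m + 1 with hu
  have hqu : (q : ℝ) ≤ u := by have : (0:ℝ) ≤ (m:ℝ) := Nat.cast_nonneg m; linarith
  set S : Set ℝ := Icc (q : ℝ) u ∩ (A : ℝ → ℝ) ⁻¹' {A q} with hS
  have hSne : (q : ℝ) ∈ S := ⟨⟨le_rfl, hqu⟩, rfl⟩
  have hSbdd : BddAbove S := (bddAbove_Icc).mono inter_subset_left
  have hSclosed : IsClosed S := isClosed_Icc.inter (isClosed_singleton.preimage hAcont)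
  set σ := sSup S with hσ
  have hσS : σ ∈ S := hSclosed.csSup_mem ⟨_, hSne⟩ hSbdd
  have hsub : {t : ℝ | (q : ℝ) < t ∧ A q = A t} ∩ Iic u ⊆ Ioc (q : ℝ) σ := by
    rintro t ⟨⟨ht1, ht2⟩, ht3⟩
    exact ⟨ht1, le_csSup hSbdd ⟨⟨ht1.le, ht3⟩, ht2.symm⟩⟩
  refine measure_mono_null hsub ?_
  rw [A.measure_Ioc]
  have : A σ = A q := hσS.2
  simp [this]

/-- `C` does not charge the plateaus of `A` inside `[0, T]`. -/
lemma C_plateau_null {T : ℝ} (A C : StieltjesFunction ℝ)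
    (hAC : C.measure.restrict (Set.Icc 0 T) ≪ A.measure.restrict (Set.Icc 0 T))
    {s t : ℝ} (hs : 0 ≤ s) (hst : s ≤ t) (ht : t ≤ T) (h : A s = A t) :
    C.measure (Set.Ioc s t) = 0 := by
  have hsub : Set.Ioc s t ⊆ Set.Icc 0 T := fun x hx => ⟨hs.trans hx.1.le, hx.2.trans ht⟩
  have hA : A.measure.restrict (Set.Icc 0 T) (Set.Ioc s t) = 0 := by
    rw [Measure.restrict_apply measurableSet_Ioc, Set.inter_eq_self_of_subset_left hsub,
      A.measure_Ioc, h, sub_self, ENNReal.ofReal_zero]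
  have hC := hAC hA
  rwa [Measure.restrict_apply measurableSet_Ioc,
    Set.inter_eq_self_of_subset_left hsub] at hC

/-- The pushforward measure `ν = A_* (dC|_(0,T])` computes `dC` of intervals. -/
lemma nu_Ioc {T : ℝ} (A C : StieltjesFunction ℝ) (hAcont : Continuous A)
    (hAC : C.measure.restrict (Set.Icc 0 T) ≪ A.measure.restrict (Set.Icc 0 T))
    {s t : ℝ} (hs : 0 ≤ s) (hst : s ≤ t) (ht : t ≤ T) :
    Measure.map A (C.measure.restrict (Set.Ioc 0 T)) (Set.Ioc (A s) (A t))
      = C.measure (Set.Ioc s t) := by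
  rw [Measure.map_apply A.mono.measurable measurableSet_Ioc,
    Measure.restrict_apply (A.mono.measurable measurableSet_Ioc)]
  have h0T : (0 : ℝ) ≤ T := hs.trans (hst.trans ht)
  -- right end of the plateau of `A s` inside `[s, t]`
  set S1 : Set ℝ := Icc s t ∩ (A : ℝ → ℝ) ⁻¹' {A s} with hS1
  have hS1ne : s ∈ S1 := ⟨⟨le_rfl, hst⟩, rfl⟩
  have hS1bdd : BddAbove S1 := (bddAbove_Icc).mono inter_subset_left
  have hS1closed : IsClosed S1 := isClosed_Icc.inter (isClosed_singleton.preimage hAcont)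
  set σ1 := sSup S1 with hσ1
  have hσ1S : σ1 ∈ S1 := hS1closed.csSup_mem ⟨_, hS1ne⟩ hS1bdd
  -- right end of the plateau of `A t` inside `[t, T]`
  set S2 : Set ℝ := Icc t T ∩ (A : ℝ → ℝ) ⁻¹' {A t} with hS2
  have hS2ne : t ∈ S2 := ⟨⟨le_rfl, ht⟩, rfl⟩
  have hS2bdd : BddAbove S2 := (bddAbove_Icc).mono inter_subset_left
  have hS2closed : IsClosed S2 := isClosed_Icc.inter (isClosed_singleton.preimage hAcont)
  set σ2 := sSup S2 with hσ2
  have hσ2S : σ2 ∈ S2 := hS2closed.csSup_mem ⟨_, hS2ne⟩ hS2bdd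
  have h1 : C.measure (Set.Ioc s σ1) = 0 :=
    C_plateau_null A C hAC hs hσ1S.1.1 (hσ1S.1.2.trans ht) hσ1S.2.symm
  have h2 : C.measure (Set.Ioc t σ2) = 0 :=
    C_plateau_null A C hAC (hs.trans hst) hσ2S.1.1 hσ2S.1.2 hσ2S.2.symm
  have hP1 : (A : ℝ → ℝ) ⁻¹' Set.Ioc (A s) (A t) ∩ Set.Ioc 0 T
      ⊆ Set.Ioc s t ∪ Set.Ioc t σ2 := by
    rintro x ⟨⟨hx1, hx2⟩, hx3, hx4⟩
    rcases le_or_gt x t with hxt | hxt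
    · left
      refine ⟨?_, hxt⟩
      by_contra hxs
      exact absurd (A.mono (not_lt.1 hxs)) (not_le.2 hx1)
    · right
      have : A x = A t := le_antisymm hx2 (A.mono hxt.le)
      exact ⟨hxt, le_csSup hS2bdd ⟨⟨hxt.le, hx4⟩, this⟩⟩
  have hP2 : Set.Ioc s t
      ⊆ ((A : ℝ → ℝ) ⁻¹' Set.Ioc (A s) (A t) ∩ Set.Ioc 0 T) ∪ Set.Ioc s σ1 := by
    rintro x ⟨hx1, hx2⟩
    rcases lt_or_ge (A s) (A x) with hAx | hAx
    · left
      exact ⟨⟨hAx, A.mono hx2⟩, lt_of_le_of_lt hs hx1, hx2.trans ht⟩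
    · right
      have : A x = A s := le_antisymm hAx (A.mono hx1.le)
      exact ⟨hx1, le_csSup hS1bdd ⟨⟨hx1.le, hx2⟩, this⟩⟩
  refine le_antisymm ?_ ?_
  · calc C.measure ((A : ℝ → ℝ) ⁻¹' Set.Ioc (A s) (A t) ∩ Set.Ioc 0 T)
        ≤ C.measure (Set.Ioc s t ∪ Set.Ioc t σ2) := measure_mono hP1
      _ ≤ C.measure (Set.Ioc s t) + C.measure (Set.Ioc t σ2) := measure_union_le _ _
      _ = C.measure (Set.Ioc s t) := by rw [h2, add_zero]
  · calc C.measure (Set.Ioc s t)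
        ≤ C.measure (((A : ℝ → ℝ) ⁻¹' Set.Ioc (A s) (A t) ∩ Set.Ioc 0 T) ∪ Set.Ioc s σ1) :=
          measure_mono hP2
      _ ≤ C.measure ((A : ℝ → ℝ) ⁻¹' Set.Ioc (A s) (A t) ∩ Set.Ioc 0 T)
          + C.measure (Set.Ioc s σ1) := measure_union_le _ _
      _ = C.measure ((A : ℝ → ℝ) ⁻¹' Set.Ioc (A s) (A t) ∩ Set.Ioc 0 T) := by
          rw [h1, add_zero]

/-- The cumulative distribution function of a finite measure on `ℝ`,
as a Stieltjes function. -/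
noncomputable def finCDF (ν : Measure ℝ) [IsFiniteMeasure ν] : StieltjesFunction ℝ where
  toFun y := (ν (Set.Iic y)).toReal
  mono' x y hxy :=
    ENNReal.toReal_mono (measure_ne_top _ _) (measure_mono (Set.Iic_subset_Iic.2 hxy))
  right_continuous' x := by
    have hmono : Monotone fun y : ℝ => (ν (Set.Iic y)).toReal := fun u v huv =>
      ENNReal.toReal_mono (measure_ne_top _ _) (measure_mono (Set.Iic_subset_Iic.2 huv))
    rw [ContinuousWithinAt]
    refine tendsto_order.2 ⟨fun l hl => ?_, fun u hu => ?_⟩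
    · filter_upwards [self_mem_nhdsWithin] with y hy
      exact lt_of_lt_of_le hl (hmono hy)
    · -- right continuity of the measure of `Iic`
      have hseq : Tendsto (fun n : ℕ => ν (Set.Iic (x + 1 / (n + 1)))) atTop
          (𝓝 (ν (⋂ n : ℕ, Set.Iic (x + 1 / (n + 1))))) := by
        refine tendsto_measure_iInter_atTop (fun n => measurableSet_Iic.nullMeasurableSet)
          ?_ ⟨0, measure_ne_top _ _⟩
        intro m n hmn
        refine Set.Iic_subset_Iic.2 ?_
        have h1 : (1:ℝ)/(n+1) ≤ 1/(m+1) := by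
          apply one_div_le_one_div_of_le (by positivity)
          have : (m:ℝ) ≤ n := Nat.cast_le.2 hmn
          linarith
        linarith
      have hInter : (⋂ n : ℕ, Set.Iic (x + 1 / ((n : ℝ) + 1))) = Set.Iic x := by
        ext z
        simp only [Set.mem_iInter, Set.mem_Iic]
        constructor
        · intro h
          by_contra hz
          push_neg at hz
          obtain ⟨n, hn⟩ := exists_nat_one_div_lt (sub_pos.2 hz)
          have := h n
          linarith
        · intro h n
          have : (0 : ℝ) < 1 / ((n : ℝ) + 1) := by positivity
          linarith
      rw [hInter] at hseq
      have hseq' : Tendsto (fun n : ℕ => (ν (Set.Iic (x + 1 / (n + 1)))).toReal) atTop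
          (𝓝 ((ν (Set.Iic x)).toReal)) :=
        (ENNReal.tendsto_toReal (measure_ne_top _ _)).comp hseq
      have : ∀ᶠ n : ℕ in atTop, (ν (Set.Iic (x + 1 / (n + 1)))).toReal < u :=
        hseq'.eventually_lt_const hu
      obtain ⟨n, hn⟩ := this.exists
      have hx : x < x + 1 / ((n : ℝ) + 1) := by
        have : (0 : ℝ) < 1 / ((n : ℝ) + 1) := by positivity
        linarith
      filter_upwards [self_mem_nhdsWithin,
        mem_nhdsWithin_of_mem_nhds (Iio_mem_nhds hx)] with y hy1 hy2
      exact lt_of_le_of_lt (hmono (le_of_lt hy2)) hn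

lemma finCDF_apply (ν : Measure ℝ) [IsFiniteMeasure ν] (y : ℝ) :
    finCDF ν y = (ν (Set.Iic y)).toReal := rfl

lemma finCDF_sub (ν : Measure ℝ) [IsFiniteMeasure ν] {z y : ℝ} (hzy : z ≤ y) :
    finCDF ν y - finCDF ν z = (ν (Set.Ioc z y)).toReal := by
  have hdisj : Disjoint (Set.Iic z) (Set.Ioc z y) := by
    simp [Set.disjoint_left]
    intro a ha ha'
    exact absurd ha' (not_lt.2 ha)
  have hunion : Set.Iic z ∪ Set.Ioc z y = Set.Iic y := Set.Iic_union_Ioc_eq_Iic hzy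
  have : ν (Set.Iic y) = ν (Set.Iic z) + ν (Set.Ioc z y) := by
    rw [← hunion, measure_union hdisj measurableSet_Ioc]
  rw [finCDF_apply, finCDF_apply, this,
    ENNReal.toReal_add (measure_ne_top _ _) (measure_ne_top _ _)]
  ring

/-- Let `A` be continuous and nondecreasing with `A 0 = 0`, and
`C` nondecreasing with `dC ≪ dA` on `[0,T]`. Then the density
`c_t = limsup_n (C_t − C_{(t−1/n)∨0})/(A_t − A_{(t−1/n)∨0})` (with `0/0 = 0`,
set to `0` when the limsup is infinite) is Borel measurable and
`C_t = C_0 + ∫_0^t c_s dA_s` for all `t ∈ [0,T]`. -/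
theorem stmt19 (T : ℝ) (hT : 0 < T) (A C : StieltjesFunction ℝ)
    (hAcont : Continuous A) (hA0 : A 0 = 0)
    (hAC : C.measure.restrict (Set.Icc 0 T) ≪ A.measure.restrict (Set.Icc 0 T)) :
    Measurable (stieltjesDeriv A C) ∧
    ∀ t ∈ Set.Icc (0 : ℝ) T,
      C t = C 0 + ∫ s in Set.Ioc (0 : ℝ) t, stieltjesDeriv A C s ∂A.measure := by
  have hAmeas : Measurable (A : ℝ → ℝ) := A.mono.measurable
  have hCmeas : Measurable (C : ℝ → ℝ) := C.mono.measurable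
  have h0T : (0 : ℝ) ≤ T := hT.le
  -- Measurability of the density.
  have hq : ∀ n : ℕ, Measurable (diffQuot A C n) := by
    intro n
    have hmax : Measurable fun t : ℝ => max (t - 1 / (n + 1)) 0 :=
      (measurable_id.sub_const _).max measurable_const
    exact (ENNReal.measurable_ofReal.comp (hCmeas.sub (hCmeas.comp hmax))).div
      (ENNReal.measurable_ofReal.comp (hAmeas.sub (hAmeas.comp hmax)))
  have hlimsup : Measurable fun t => limsup (fun n => diffQuot A C n t) atTop :=
    Measurable.limsup hq
  have hmeasD : Measurable (stieltjesDeriv A C) := by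
    unfold stieltjesDeriv
    refine Measurable.ite ?_ hlimsup.ennreal_toReal measurable_const
    exact (hlimsup (measurableSet_singleton ⊤)).compl
  -- The pushforward measure `ν`.
  haveI hfinres : IsFiniteMeasure (C.measure.restrict (Set.Ioc 0 T)) :=
    ⟨by rw [Measure.restrict_apply_univ, C.measure_Ioc]; exact ENNReal.ofReal_lt_top⟩
  set ν := Measure.map A (C.measure.restrict (Set.Ioc 0 T)) with hν
  haveI : IsFiniteMeasure ν := by rw [hν]; exact Measure.isFiniteMeasure_map _ _
  have hν_bot : ∀ y : ℝ, y < 0 → ν (Set.Iic y) = 0 := by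
    intro y hy
    rw [hν, Measure.map_apply hAmeas measurableSet_Iic,
      Measure.restrict_apply (hAmeas measurableSet_Iic)]
    have hempty : (A : ℝ → ℝ) ⁻¹' Set.Iic y ∩ Set.Ioc 0 T = ∅ := by
      refine eq_empty_of_forall_notMem fun x hx => ?_
      have h1 : (0 : ℝ) ≤ A x := hA0 ▸ A.mono hx.2.1.le
      exact absurd (lt_of_le_of_lt hx.1 hy) (not_lt.2 h1)
    rw [hempty]; simp
  have hν_top : ∀ y : ℝ, A T ≤ y → ν (Set.Ioi y) = 0 := by
    intro y hy
    rw [hν, Measure.map_apply hAmeas measurableSet_Ioi,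
      Measure.restrict_apply (hAmeas measurableSet_Ioi)]
    have hempty : (A : ℝ → ℝ) ⁻¹' Set.Ioi y ∩ Set.Ioc 0 T = ∅ := by
      refine eq_empty_of_forall_notMem fun x hx => ?_
      have h1 : A x ≤ y := (A.mono hx.2.2).trans hy
      exact absurd hx.1 (not_lt.2 h1)
    rw [hempty]; simp
  -- The CDF of `ν`.
  set G := finCDF ν with hG
  have hGbot : Tendsto (G : ℝ → ℝ) atBot (𝓝 0) := by
    have hev : (G : ℝ → ℝ) =ᶠ[atBot] fun _ => 0 := by
      filter_upwards [eventually_lt_atBot (0 : ℝ)] with y hy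
      rw [hG, finCDF_apply, hν_bot y hy, ENNReal.toReal_zero]
    exact Tendsto.congr' hev.symm tendsto_const_nhds
  have hGtop : Tendsto (G : ℝ → ℝ) atTop (𝓝 ((ν Set.univ).toReal)) := by
    have hev : (G : ℝ → ℝ) =ᶠ[atTop] fun _ => (ν Set.univ).toReal := by
      filter_upwards [eventually_ge_atTop (A T)] with y hy
      rw [hG, finCDF_apply]
      congr 1
      refine le_antisymm (measure_mono (Set.subset_univ _)) ?_
      have h2 : ν Set.univ ≤ ν (Set.Iic y) + ν (Set.Ioi y) := by
        rw [← Set.Iic_union_Ioi (a := y)]; exact measure_union_le _ _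
      rwa [hν_top y hy, add_zero] at h2
    exact Tendsto.congr' hev.symm tendsto_const_nhds
  haveI : IsFiniteMeasure G.measure :=
    ⟨by rw [G.measure_univ hGbot hGtop]; exact ENNReal.ofReal_lt_top⟩
  have hGmeasure : G.measure = ν := by
    refine MeasureTheory.Measure.ext_of_Iic _ _ fun c => ?_
    rw [G.measure_Iic hGbot, sub_zero, hG, finCDF_apply,
      ENNReal.ofReal_toReal (measure_ne_top _ _)]
  -- The Radon-Nikodym derivative of `ν` w.r.t. Lebesgue measure.
  set g := ν.rnDeriv volume with hg
  have hgmeas : Measurable g := Measure.measurable_rnDeriv _ _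
  have hae1 : ∀ᵐ y : ℝ, HasDerivAt G ((g y).toReal) y ∧ g y < ⊤ := by
    have h1 := G.ae_hasDerivAt
    rw [hGmeasure] at h1
    filter_upwards [h1, Measure.rnDeriv_lt_top ν volume] with y hy1 hy2 using ⟨hy1, hy2⟩
  set Nset := toMeasurable volume {y : ℝ | ¬ (HasDerivAt G ((g y).toReal) y ∧ g y < ⊤)}
    with hNset
  have hNmeas : MeasurableSet Nset := by rw [hNset]; exact measurableSet_toMeasurable _ _
  have hNnull : volume Nset = 0 := by
    rw [hNset, measure_toMeasurable]
    exact ae_iff.1 hae1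
  -- Transfer the null set back to `[0, T]`.
  have hpull : ∀ᵐ t ∂(A.measure.restrict (Set.Ioc 0 T)), A t ∉ Nset := by
    rw [ae_iff]
    simp only [not_not]
    have hset : {t : ℝ | A t ∈ Nset} = (A : ℝ → ℝ) ⁻¹' Nset := rfl
    rw [hset, ← Measure.map_apply hAmeas hNmeas, map_stieltjes_restrict A hAcont h0T,
      Measure.restrict_apply hNmeas]
    exact measure_inter_null_of_null_left _ hNnull
  have hDae : ∀ᵐ t ∂(A.measure.restrict (Set.Ioc 0 T)), ¬ ∃ s, s < t ∧ A s = A t := by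
    apply ae_restrict_of_ae
    rw [ae_iff]
    simp only [not_not]
    exact plateau_null A hAcont
  -- The main almost-everywhere identity.
  have hmain : ∀ᵐ t ∂(A.measure.restrict (Set.Ioc 0 T)),
      stieltjesDeriv A C t = (g (A t)).toReal := by
    filter_upwards [hpull, hDae, ae_restrict_mem measurableSet_Ioc] with t hN hD ht
    have hP : HasDerivAt G ((g (A t)).toReal) (A t) ∧ g (A t) < ⊤ := by
      by_contra h
      exact hN (subset_toMeasurable _ _ h)
    set s : ℕ → ℝ := fun n => max (t - 1 / (n + 1)) 0 with hs
    have hs_lt : ∀ n, s n < t := by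
      intro n
      refine max_lt ?_ ht.1
      have h1 : (0 : ℝ) < 1 / ((n : ℝ) + 1) := by positivity
      linarith
    have hs0 : ∀ n, 0 ≤ s n := fun n => le_max_right _ _
    have hyn_lt : ∀ n, A (s n) < A t := by
      intro n
      rcases lt_or_eq_of_le (A.mono (hs_lt n).le) with h | h
      · exact h
      · exact absurd ⟨s n, hs_lt n, h⟩ hD
    have hCs : ∀ n, C t - C (s n) = G (A t) - G (A (s n)) := by
      intro n
      have hnu := nu_Ioc A C hAcont hAC (hs0 n) (hs_lt n).le ht.2
      rw [← hν] at hnu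
      rw [hG, finCDF_sub ν (A.mono (hs_lt n).le), hnu, C.measure_Ioc,
        ENNReal.toReal_ofReal (sub_nonneg.2 (C.mono (hs_lt n).le))]
    have hAs_tendsto : Tendsto (fun n => A (s n)) atTop (𝓝 (A t)) := by
      have h1 : Tendsto (fun n : ℕ => t - 1 / ((n : ℝ) + 1)) atTop (𝓝 (t - 0)) :=
        tendsto_const_nhds.sub tendsto_one_div_add_atTop_nhds_zero_nat
      rw [sub_zero] at h1
      have hst : Tendsto s atTop (𝓝 t) :=
        tendsto_of_tendsto_of_tendsto_of_le_of_le h1 tendsto_const_nhds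
          (fun n => le_max_left _ _) (fun n => (hs_lt n).le)
      exact (hAcont.tendsto t).comp hst
    have hslope : Tendsto (fun n => (C t - C (s n)) / (A t - A (s n))) atTop
        (𝓝 ((g (A t)).toReal)) := by
      have hd := hP.1
      rw [hasDerivAt_iff_tendsto_slope] at hd
      have hseq : Tendsto (fun n => A (s n)) atTop (𝓝[≠] (A t)) := by
        refine tendsto_nhdsWithin_of_tendsto_nhds_of_eventually_within _ hAs_tendsto ?_
        exact Eventually.of_forall fun n => (hyn_lt n).ne
      refine (hd.comp hseq).congr fun n => ?_
      show slope G (A t) (A (s n)) = (C t - C (s n)) / (A t - A (s n))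
      rw [slope_def_field, hCs n, ← neg_sub (G (A t)) (G (A (s n))),
        ← neg_sub (A t) (A (s n)), neg_div_neg_eq]
    have hquot : Tendsto (fun n => diffQuot A C n t) atTop
        (𝓝 (ENNReal.ofReal ((g (A t)).toReal))) := by
      refine (ENNReal.tendsto_ofReal hslope).congr fun n => ?_
      have hsn : s n = max (t - 1 / (n + 1)) 0 := rfl
      show ENNReal.ofReal ((C t - C (s n)) / (A t - A (s n))) = diffQuot A C n t
      rw [ENNReal.ofReal_div_of_pos (sub_pos.2 (hyn_lt n))]
      simp only [diffQuot, ← hsn]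
    have hlim : limsup (fun n => diffQuot A C n t) atTop
        = ENNReal.ofReal ((g (A t)).toReal) := hquot.limsup_eq
    simp only [stieltjesDeriv, hlim]
    rw [if_pos ENNReal.ofReal_ne_top, ENNReal.toReal_ofReal ENNReal.toReal_nonneg]
  -- Absolute continuity of `ν` w.r.t. Lebesgue measure.
  have hνvol : ν ≪ volume := by
    intro N hN
    have hN' : volume (toMeasurable volume N) = 0 := by rwa [measure_toMeasurable]
    refine measure_mono_null (subset_toMeasurable volume N) ?_
    rw [hν, Measure.map_apply hAmeas (measurableSet_toMeasurable _ _),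
      Measure.restrict_apply (hAmeas (measurableSet_toMeasurable _ _))]
    set S := (A : ℝ → ℝ) ⁻¹' toMeasurable volume N ∩ Set.Ioc 0 T with hSdef
    have hSmeas : MeasurableSet S :=
      (hAmeas (measurableSet_toMeasurable _ _)).inter measurableSet_Ioc
    have hμS : A.measure S = 0 := by
      have h2 : A.measure S
          = Measure.map A (A.measure.restrict (Set.Ioc 0 T)) (toMeasurable volume N) := by
        rw [Measure.map_apply hAmeas (measurableSet_toMeasurable _ _),
          Measure.restrict_apply (hAmeas (measurableSet_toMeasurable _ _))]
      rw [h2, map_stieltjes_restrict A hAcont h0T,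
        Measure.restrict_apply (measurableSet_toMeasurable _ _)]
      exact measure_inter_null_of_null_left _ hN'
    have hSsub : S ⊆ Set.Icc 0 T := fun x hx => ⟨hx.2.1.le, hx.2.2⟩
    have h1 : A.measure.restrict (Set.Icc 0 T) S = 0 := by
      rw [Measure.restrict_apply hSmeas, Set.inter_eq_self_of_subset_left hSsub]
      exact hμS
    have h2 := hAC h1
    rwa [Measure.restrict_apply hSmeas, Set.inter_eq_self_of_subset_left hSsub] at h2
  -- The integral identity.
  refine ⟨hmeasD, fun t ht => ?_⟩
  have hsub : Set.Ioc (0 : ℝ) t ⊆ Set.Ioc 0 T := Set.Ioc_subset_Ioc le_rfl ht.2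
  have hmain_t : ∀ᵐ x ∂(A.measure.restrict (Set.Ioc 0 t)),
      stieltjesDeriv A C x = (g (A x)).toReal :=
    ae_restrict_of_ae_restrict_of_subset hsub hmain
  have hgfin : ∀ᵐ y ∂(volume.restrict (Set.Ioc (A 0) (A t))), g y < ⊤ :=
    ae_restrict_of_ae (Measure.rnDeriv_lt_top ν volume)
  have hint : ∫ x in Set.Ioc (0 : ℝ) t, stieltjesDeriv A C x ∂A.measure = C t - C 0 := by
    rw [integral_congr_ae hmain_t]
    have h1 : ∫ x in Set.Ioc (0 : ℝ) t, (g (A x)).toReal ∂A.measure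
        = ∫ y, (g y).toReal ∂(Measure.map A (A.measure.restrict (Set.Ioc 0 t))) := by
      rw [integral_map hAmeas.aemeasurable]
      exact (hgmeas.ennreal_toReal).aestronglyMeasurable
    have hnu := nu_Ioc A C hAcont hAC le_rfl ht.1 ht.2
    rw [← hν] at hnu
    rw [h1, map_stieltjes_restrict A hAcont ht.1,
      integral_toReal (hgmeas.aemeasurable) hgfin,
      Measure.setLIntegral_rnDeriv hνvol, hnu, C.measure_Ioc,
      ENNReal.toReal_ofReal (sub_nonneg.2 (C.mono ht.1))]
  rw [hint]
  ring
end
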